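/- The symmetric bilinear form q = ω₁² + ω₂² + ω₃² − α₁² + β₁² + β₂² + β₃² + γ₁² + γ₂² + γ₃² on so(5) (with respect to the graded basis {X₁,X₂,X₃, A₁, B₁,B₂,B₃, C₁,C₂,C₃}) is nondegenerate of signature (1,9), and its restriction to m = g_a ⊕ g_b ⊕ g_c is a Lorentzian form (signature (1,6)) that is ad(g_e)-invariant, where g_e ≅ so(3) sits as the lower-right 3×3 block. -/

import Mathlib

open Matrix

/-- Elementary skew-symmetric matrix: `1` at `(i,j)`, `-1` at `(j,i)` (0-based indices). -/
def E (i j : Fin 5) : Matrix (Fin 5) (Fin 5) ℝ :=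
  Matrix.single i j 1 - Matrix.single j i 1

/-- `so(5)`: the skew-symmetric `5×5` real matrices. -/
def so5 : Submodule ℝ (Matrix (Fin 5) (Fin 5) ℝ) where
  carrier := {X | Xᵀ = -X}
  add_mem' := by
    rintro a b ha hb
    show (a + b)ᵀ = -(a + b)
    rw [transpose_add, ha, hb]; abel
  zero_mem' := by simp
  smul_mem' := by
    rintro c X h
    show (c • X)ᵀ = -(c • X)
    rw [transpose_smul, h, smul_neg]

/-- `g_e = span{X₁,X₂,X₃}`, the lower-right `so(3)`-block (0-based entries
`(2,3), (2,4), (3,4)`). -/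
noncomputable def ge : Submodule ℝ (Matrix (Fin 5) (Fin 5) ℝ) :=
  Submodule.span ℝ {E 2 3, E 2 4, E 3 4}

/-- `m = g_a ⊕ g_b ⊕ g_c = span{A₁, B₁, B₂, B₃, C₁, C₂, C₃}`, with
`A₁ = E 0 1`, `Bᵢ = E 0 (i+1)`, `Cᵢ = E 1 (i+1)`. -/
noncomputable def mm : Submodule ℝ (Matrix (Fin 5) (Fin 5) ℝ) :=
  Submodule.span ℝ {E 0 1, E 0 2, E 0 3, E 0 4, E 1 2, E 1 3, E 1 4}

/-- The symmetric bilinear form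
`q = ω₁² + ω₂² + ω₃² - α₁² + β₁² + β₂² + β₃² + γ₁² + γ₂² + γ₃²`
in the coordinates given by the graded basis (upper-triangular entries). -/
def q (X Y : Matrix (Fin 5) (Fin 5) ℝ) : ℝ :=
  X 2 3 * Y 2 3 + X 2 4 * Y 2 4 + X 3 4 * Y 3 4
  - X 0 1 * Y 0 1
  + X 0 2 * Y 0 2 + X 0 3 * Y 0 3 + X 0 4 * Y 0 4
  + X 1 2 * Y 1 2 + X 1 3 * Y 1 3 + X 1 4 * Y 1 4

lemma E_apply (i j a b : Fin 5) : E i j a b =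
    (if i = a ∧ j = b then 1 else 0) - (if j = a ∧ i = b then 1 else 0) := by
  simp [E, Matrix.single, Matrix.sub_apply, and_comm]

lemma E_skew (i j : Fin 5) : (E i j)ᵀ = -(E i j) := by
  ext a b
  simp only [Matrix.transpose_apply, Matrix.neg_apply, E_apply]
  by_cases h1 : i = a <;> by_cases h2 : j = b <;> by_cases h3 : j = a <;> by_cases h4 : i = b <;>
    simp_all

lemma E_mem_so5 (i j : Fin 5) : E i j ∈ so5 := E_skew i j

lemma skew_apply {X : Matrix (Fin 5) (Fin 5) ℝ} (h : X ∈ so5) (i j : Fin 5) :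
    X j i = -X i j := by
  have : Xᵀ = -X := h
  have := congrFun (congrFun this i) j
  simpa [Matrix.transpose_apply, Matrix.neg_apply] using this

lemma skew_diag {X : Matrix (Fin 5) (Fin 5) ℝ} (h : X ∈ so5) (i : Fin 5) : X i i = 0 := by
  have := skew_apply h i i; linarith

/-- structural facts for elements of `ge` -/
lemma ge_struct {X : Matrix (Fin 5) (Fin 5) ℝ} (h : X ∈ ge) :
    X ∈ so5 ∧ (∀ j, X 0 j = 0) ∧ (∀ j, X 1 j = 0) := by
  induction h using Submodule.span_induction with
  | mem x hx =>
    rcases hx with rfl | rfl | rfl <;>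
      refine ⟨E_mem_so5 _ _, fun j => ?_, fun j => ?_⟩ <;>
      fin_cases j <;> simp [E_apply]
  | zero => exact ⟨so5.zero_mem, fun j => rfl, fun j => rfl⟩
  | add x y hx hy ihx ihy =>
    exact ⟨so5.add_mem ihx.1 ihy.1,
      fun j => by simp [Matrix.add_apply, ihx.2.1 j, ihy.2.1 j],
      fun j => by simp [Matrix.add_apply, ihx.2.2 j, ihy.2.2 j]⟩
  | smul c x hx ih =>
    exact ⟨so5.smul_mem c ih.1,
      fun j => by simp [Matrix.smul_apply, ih.2.1 j],
      fun j => by simp [Matrix.smul_apply, ih.2.2 j]⟩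

/-- structural facts for elements of `mm` -/
lemma mm_struct {X : Matrix (Fin 5) (Fin 5) ℝ} (h : X ∈ mm) :
    X ∈ so5 ∧ X 2 3 = 0 ∧ X 2 4 = 0 ∧ X 3 4 = 0 := by
  induction h using Submodule.span_induction with
  | mem x hx =>
    rcases hx with rfl | rfl | rfl | rfl | rfl | rfl | rfl <;>
      exact ⟨E_mem_so5 _ _, by simp [E_apply], by simp [E_apply], by simp [E_apply]⟩
  | zero => exact ⟨so5.zero_mem, rfl, rfl, rfl⟩
  | add x y hx hy ihx ihy =>
    refine ⟨so5.add_mem ihx.1 ihy.1, ?_, ?_, ?_⟩ <;>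
      simp [Matrix.add_apply, ihx.2.1, ihy.2.1, ihx.2.2.1, ihy.2.2.1, ihx.2.2.2, ihy.2.2.2]
  | smul c x hx ih =>
    refine ⟨so5.smul_mem c ih.1, ?_, ?_, ?_⟩ <;>
      simp [Matrix.smul_apply, ih.2.1, ih.2.2.1, ih.2.2.2]

/-- The form `q` is nondegenerate on `so(5)` of Lorentz-type signature `(1,9)`
(negative exactly on the line `ℝ·A₁`, positive definite on the orthogonal
complement of `A₁`), its restriction to `m` is nondegenerate of signature `(1,6)`,
and this restriction is `ad(g_e)`-invariant. -/
theorem lorentzian_form_so5 :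
    (∀ X ∈ so5, (∀ Y ∈ so5, q X Y = 0) → X = 0) ∧
    (∀ X ∈ so5, X ≠ 0 → X 0 1 = 0 → 0 < q X X) ∧
    (∀ c : ℝ, c ≠ 0 → q (c • E 0 1) (c • E 0 1) < 0) ∧
    (E 0 1 ∈ mm) ∧
    (∀ X ∈ mm, (∀ Y ∈ mm, q X Y = 0) → X = 0) ∧
    (∀ X ∈ ge, ∀ Y ∈ mm, ∀ Z ∈ mm, q ⁅X, Y⁆ Z + q Y ⁅X, Z⁆ = 0) := by
  have upper_zero : ∀ X ∈ so5, X 0 1 = 0 → X 0 2 = 0 → X 0 3 = 0 → X 0 4 = 0 →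
      X 1 2 = 0 → X 1 3 = 0 → X 1 4 = 0 → X 2 3 = 0 → X 2 4 = 0 → X 3 4 = 0 → X = 0 := by
    intro X hX h01 h02 h03 h04 h12 h13 h14 h23 h24 h34
    have h10 : X 1 0 = 0 := by rw [skew_apply hX 0 1, h01, neg_zero]
    have h20 : X 2 0 = 0 := by rw [skew_apply hX 0 2, h02, neg_zero]
    have h30 : X 3 0 = 0 := by rw [skew_apply hX 0 3, h03, neg_zero]
    have h40 : X 4 0 = 0 := by rw [skew_apply hX 0 4, h04, neg_zero]
    have h21 : X 2 1 = 0 := by rw [skew_apply hX 1 2, h12, neg_zero]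
    have h31 : X 3 1 = 0 := by rw [skew_apply hX 1 3, h13, neg_zero]
    have h41 : X 4 1 = 0 := by rw [skew_apply hX 1 4, h14, neg_zero]
    have h32 : X 3 2 = 0 := by rw [skew_apply hX 2 3, h23, neg_zero]
    have h42 : X 4 2 = 0 := by rw [skew_apply hX 2 4, h24, neg_zero]
    have h43 : X 4 3 = 0 := by rw [skew_apply hX 3 4, h34, neg_zero]
    have hd0 : X 0 0 = 0 := skew_diag hX 0
    have hd1 : X 1 1 = 0 := skew_diag hX 1
    have hd2 : X 2 2 = 0 := skew_diag hX 2
    have hd3 : X 3 3 = 0 := skew_diag hX 3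
    have hd4 : X 4 4 = 0 := skew_diag hX 4
    ext i j
    fin_cases i <;> fin_cases j <;> simp only [Matrix.zero_apply] <;> assumption
  have posdef : ∀ X : Matrix (Fin 5) (Fin 5) ℝ, X ∈ so5 → X ≠ 0 → X 0 1 = 0 → 0 < q X X := by
    intro X hX hX0 h01
    have hqq : q X X = X 2 3 * X 2 3 + X 2 4 * X 2 4 + X 3 4 * X 3 4 + X 0 2 * X 0 2
        + X 0 3 * X 0 3 + X 0 4 * X 0 4 + X 1 2 * X 1 2 + X 1 3 * X 1 3 + X 1 4 * X 1 4 := by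
      simp [q, h01]
    have hnn : 0 ≤ q X X := by
      rw [hqq]
      linarith [mul_self_nonneg (X 2 3), mul_self_nonneg (X 2 4), mul_self_nonneg (X 3 4),
        mul_self_nonneg (X 0 2), mul_self_nonneg (X 0 3), mul_self_nonneg (X 0 4),
        mul_self_nonneg (X 1 2), mul_self_nonneg (X 1 3), mul_self_nonneg (X 1 4)]
    rcases hnn.lt_or_eq with h | h
    · exact h
    · exfalso
      apply hX0
      have n1 := mul_self_nonneg (X 2 3); have n2 := mul_self_nonneg (X 2 4)
      have n3 := mul_self_nonneg (X 3 4); have n4 := mul_self_nonneg (X 0 2)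
      have n5 := mul_self_nonneg (X 0 3); have n6 := mul_self_nonneg (X 0 4)
      have n7 := mul_self_nonneg (X 1 2); have n8 := mul_self_nonneg (X 1 3)
      have n9 := mul_self_nonneg (X 1 4)
      refine upper_zero X hX h01 ?_ ?_ ?_ ?_ ?_ ?_ ?_ ?_ ?_ <;>
        [skip; skip; skip; skip; skip; skip; skip; skip; skip] <;>
        · apply mul_self_eq_zero.mp
          apply le_antisymm _ (mul_self_nonneg _)
          rw [hqq] at h
          linarith
  refine ⟨?_, posdef, ?_, ?_, ?_, ?_⟩
  · intro X hX hq
    refine upper_zero X hX ?_ ?_ ?_ ?_ ?_ ?_ ?_ ?_ ?_ ?_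
    · have := hq (E 0 1) (E_mem_so5 0 1); simp [q, E_apply] at this; linarith
    · have := hq (E 0 2) (E_mem_so5 0 2); simpa [q, E_apply] using this
    · have := hq (E 0 3) (E_mem_so5 0 3); simpa [q, E_apply] using this
    · have := hq (E 0 4) (E_mem_so5 0 4); simpa [q, E_apply] using this
    · have := hq (E 1 2) (E_mem_so5 1 2); simpa [q, E_apply] using this
    · have := hq (E 1 3) (E_mem_so5 1 3); simpa [q, E_apply] using this
    · have := hq (E 1 4) (E_mem_so5 1 4); simpa [q, E_apply] using this
    · have := hq (E 2 3) (E_mem_so5 2 3); simpa [q, E_apply] using this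
    · have := hq (E 2 4) (E_mem_so5 2 4); simpa [q, E_apply] using this
    · have := hq (E 3 4) (E_mem_so5 3 4); simpa [q, E_apply] using this
  · intro c hc
    have h : q (c • E 0 1) (c • E 0 1) = -(c * c) := by
      simp [q, E_apply, Matrix.smul_apply]
    rw [h]
    have := mul_self_pos.mpr hc
    linarith
  · exact Submodule.subset_span (by simp)
  · intro X hX hq
    obtain ⟨hXs, h23, h24, h34⟩ := mm_struct hX
    refine upper_zero X hXs ?_ ?_ ?_ ?_ ?_ ?_ ?_ h23 h24 h34
    · have := hq (E 0 1) (Submodule.subset_span (by simp)); simp [q, E_apply] at this; linarith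
    · have := hq (E 0 2) (Submodule.subset_span (by simp)); simpa [q, E_apply] using this
    · have := hq (E 0 3) (Submodule.subset_span (by simp)); simpa [q, E_apply] using this
    · have := hq (E 0 4) (Submodule.subset_span (by simp)); simpa [q, E_apply] using this
    · have := hq (E 1 2) (Submodule.subset_span (by simp)); simpa [q, E_apply] using this
    · have := hq (E 1 3) (Submodule.subset_span (by simp)); simpa [q, E_apply] using this
    · have := hq (E 1 4) (Submodule.subset_span (by simp)); simpa [q, E_apply] using this
  · intro X hX Y hY Z hZ
    obtain ⟨hXs, hX0, hX1⟩ := ge_struct hX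
    obtain ⟨hYs, hY1, hY2, hY3⟩ := mm_struct hY
    obtain ⟨hZs, hZ1, hZ2, hZ3⟩ := mm_struct hZ
    have sX := skew_apply hXs
    have sY := skew_apply hYs
    have sZ := skew_apply hZs
    have hX0' : ∀ j, X j 0 = 0 := fun j => by rw [sX 0 j, hX0 j, neg_zero]
    have hX1' : ∀ j, X j 1 = 0 := fun j => by rw [sX 1 j, hX1 j, neg_zero]
    simp only [Ring.lie_def, q, Matrix.sub_apply, Matrix.mul_apply, Fin.sum_univ_five]
    simp only [hX0, hX1, hX0', hX1', skew_diag hXs, hY1, hY2, hY3, hZ1, hZ2, hZ3,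
      sX 2 3, sX 2 4, sX 3 4,
      sY 2 3, sY 2 4, sY 3 4, skew_diag hYs, sY 0 1, sY 0 2, sY 0 3, sY 0 4, sY 1 2, sY 1 3, sY 1 4,
      sZ 2 3, sZ 2 4, sZ 3 4, skew_diag hZs, sZ 0 1, sZ 0 2, sZ 0 3, sZ 0 4, sZ 1 2, sZ 1 3, sZ 1 4]
    ring
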